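/- Let f = χ_{[I]_{2θ}} * Φ_ξ and, for ζ > 0, define f̃(x) = (1/√(2π)) ∫_{−ζ}^{ζ} f̂(s) e^{−isx} ds. Then ‖f̃ − f‖_∞ ≤ 2√(2/π) (|I| + 4θ) (ξ/ζ) e^{−ζ²/(4ξ)}. -/

import Mathlib

open Real MeasureTheory Complex Set Filter

lemma tail_int {b : ℝ} (hb : 0 < b) (c : ℝ) :
    ∫ s in Set.Ioi c, s * Real.exp (-b * s ^ 2) = Real.exp (-b * c ^ 2) / (2 * b) := by
  have A : ∀ x : ℝ, HasDerivAt (fun x : ℝ => -(2 * b)⁻¹ * Real.exp (-b * x ^ 2))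
      (x * Real.exp (-b * x ^ 2)) x := by
    intro x
    convert (((hasDerivAt_pow 2 x).const_mul (-b)).exp.const_mul (-(2 * b)⁻¹)) using 1
    · rfl
    · rfl
    · field_simp
      ring
  have B : Tendsto (fun y : ℝ => -(2 * b)⁻¹ * Real.exp (-b * y ^ 2)) atTop
      (nhds (-(2 * b)⁻¹ * 0)) := by
    refine Tendsto.const_mul _ ?_
    exact Real.tendsto_exp_atBot.comp
      ((tendsto_pow_atTop two_ne_zero).const_mul_atTop_of_neg (neg_lt_zero.2 hb))
  have := integral_Ioi_of_hasDerivAt_of_tendsto' (a := c)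
    (fun x _ => A x) (integrable_mul_exp_neg_mul_sq hb).integrableOn B
  rw [this]
  field_simp
  ring

lemma gaussFT {b : ℝ} (hb : 0 < b) (t : ℝ) :
    ∫ s : ℝ, Complex.exp (Complex.I * (t : ℂ) * (s : ℂ)) * Complex.exp (-(b : ℂ) * (s : ℂ) ^ 2)
      = ((Real.sqrt (π / b) : ℝ) : ℂ) * Complex.exp (-(t : ℂ) ^ 2 / (4 * (b : ℂ))) := by
  have h := fourierIntegral_gaussian (b := (b : ℂ)) (by simpa using hb) ((t : ℝ) : ℂ)
  rw [h]
  congr 1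
  have h1 : ((π : ℂ) / (b : ℂ)) = (((π / b : ℝ)) : ℂ) := by push_cast; ring
  rw [h1, show ((1 / 2 : ℂ)) = (((1 / 2 : ℝ)) : ℂ) by norm_num,
    ← Complex.ofReal_cpow (by positivity)]
  norm_cast
  rw [Real.sqrt_eq_rpow]

lemma setEq {a b θ : ℝ} (hab : a ≤ b) (hθ : 0 < θ) :
    {t : ℝ | Metric.infDist t (Set.Icc a b) ≤ 2 * θ} = Set.Icc (a - 2 * θ) (b + 2 * θ) := by
  ext t
  simp only [Set.mem_setOf_eq, Set.mem_Icc]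
  constructor
  · intro h
    obtain ⟨y, hy, hyd⟩ := isCompact_Icc.exists_infDist_eq_dist ⟨a, Set.left_mem_Icc.mpr hab⟩ t
    rw [hyd, Real.dist_eq, abs_le] at h
    obtain ⟨hy1, hy2⟩ := Set.mem_Icc.mp hy
    constructor <;> linarith [h.1, h.2]
  · rintro ⟨h1, h2⟩
    have hy : max a (min t b) ∈ Set.Icc a b := by
      simp only [Set.mem_Icc]
      exact ⟨le_max_left _ _, max_le hab (min_le_right _ _)⟩
    refine le_trans (Metric.infDist_le_dist_of_mem hy) ?_
    rw [Real.dist_eq, abs_le]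
    rcases le_total t a with h | h
    · rw [min_eq_left (le_trans h hab), max_eq_left h]
      constructor <;> linarith
    · rcases le_total t b with h' | h'
      · rw [min_eq_left h', max_eq_right h]
        constructor <;> linarith
      · rw [min_eq_right h', max_eq_right hab]
        constructor <;> linarith

theorem stmt_6 (a b θ ξ ζ : ℝ) (hab : a ≤ b) (hθ : 0 < θ) (hξ : 0 < ξ) (hζ : 0 < ζ)
    (Φ : ℝ → ℝ) (hΦ : ∀ x, Φ x = Real.sqrt (ξ / π) * Real.exp (-ξ * x ^ 2))
    (f : ℝ → ℝ)
    (hf : ∀ x, f x = ∫ y,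
      Set.indicator {t : ℝ | Metric.infDist t (Set.Icc a b) ≤ 2 * θ} (fun _ => (1 : ℝ)) y
        * Φ (x - y))
    (fhat : ℝ → ℂ)
    (hfhat : ∀ s, fhat s =
      (Real.sqrt (2 * π) : ℂ)⁻¹ * ∫ x : ℝ, (f x : ℂ) * Complex.exp (Complex.I * s * x))
    (ftilde : ℝ → ℂ)
    (hftilde : ∀ x, ftilde x =
      (Real.sqrt (2 * π) : ℂ)⁻¹ *
        ∫ s in Set.Icc (-ζ) ζ, fhat s * Complex.exp (-Complex.I * s * x)) :
    ∀ x : ℝ, ‖ftilde x - (f x : ℂ)‖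
      ≤ 2 * Real.sqrt (2 / π) * ((b - a) + 4 * θ) * (ξ / ζ)
        * Real.exp (-ζ ^ 2 / (4 * ξ)) := by
  intro x
  have hπ := Real.pi_pos
  have hξc : (ξ : ℂ) ≠ 0 := by exact_mod_cast hξ.ne'
  set c : ℝ := a - 2 * θ with hc
  set d : ℝ := b + 2 * θ with hd
  have hcd : c ≤ d := by rw [hc, hd]; linarith
  set L : ℝ := d - c with hL
  have hL0 : 0 ≤ L := by rw [hL]; linarith
  -- f as a set integral
  have hf' : ∀ z : ℝ, f z = ∫ y in Set.Icc c d, Φ (z - y) := by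
    intro z
    rw [hf z, setEq hab hθ]
    rw [← integral_indicator measurableSet_Icc]
    congr 1
    funext y
    by_cases hy : y ∈ Set.Icc c d
    · have hy' : y ∈ Set.Icc (a - 2 * θ) (b + 2 * θ) := hy
      simp [Set.indicator_of_mem hy, Set.indicator_of_mem hy']
    · have hy' : y ∉ Set.Icc (a - 2 * θ) (b + 2 * θ) := hy
      simp [Set.indicator_of_notMem hy, Set.indicator_of_notMem hy']
  have hfC : ∀ z : ℝ, (f z : ℂ) = ∫ y in Set.Icc c d, ((Φ (z - y) : ℝ) : ℂ) := by
    intro z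
    rw [hf' z]
    exact integral_ofReal.symm
  have hΦc : ∀ u : ℝ, ((Φ u : ℝ) : ℂ)
      = ((Real.sqrt (ξ / π) : ℝ) : ℂ) * Complex.exp (-(ξ : ℂ) * (u : ℂ) ^ 2) := by
    intro u
    rw [hΦ]
    push_cast
    ring_nf
  have hΦ0 : ∀ u : ℝ, 0 ≤ Φ u := by
    intro u; rw [hΦ]; positivity
  -- norm helpers
  have hnorm1 : ∀ r : ℝ, ‖Complex.exp ((r : ℂ) * Complex.I)‖ = 1 := by
    intro r; rw [Complex.norm_exp_ofReal_mul_I]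
  have hnormg : ∀ s : ℝ, ‖Complex.exp (-(s : ℂ) ^ 2 / (4 * (ξ : ℂ)))‖
      = Real.exp (-(1 / (4 * ξ)) * s ^ 2) := by
    intro s
    rw [show (-(s : ℂ) ^ 2 / (4 * (ξ : ℂ))) = ((-(1 / (4 * ξ)) * s ^ 2 : ℝ) : ℂ) by
      push_cast; ring, Complex.norm_exp_ofReal]
  -- volume facts
  have hvol : volume (Set.Icc c d) < ⊤ := by
    rw [Real.volume_Icc]; exact ENNReal.ofReal_lt_top
  have hvolR : (volume (Set.Icc c d)).toReal = L := by
    rw [Real.volume_Icc, ENNReal.toReal_ofReal (by linarith)]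

  -- Gaussian FT of Phi
  have hsq1 : Real.sqrt (ξ / π) * Real.sqrt (π / ξ) = 1 := by
    rw [← Real.sqrt_mul (by positivity), show ξ / π * (π / ξ) = 1 by field_simp]
    exact Real.sqrt_one
  have hG : ∀ s : ℝ, (∫ u : ℝ, ((Φ u : ℝ) : ℂ) * Complex.exp (Complex.I * (s : ℂ) * (u : ℂ)))
      = Complex.exp (-(s : ℂ) ^ 2 / (4 * (ξ : ℂ))) := by
    intro s
    have heq : (fun u : ℝ => ((Φ u : ℝ) : ℂ) * Complex.exp (Complex.I * (s : ℂ) * (u : ℂ)))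
        = fun u : ℝ => ((Real.sqrt (ξ / π) : ℝ) : ℂ) *
          (Complex.exp (Complex.I * (s : ℂ) * (u : ℂ)) *
            Complex.exp (-(ξ : ℂ) * (u : ℂ) ^ 2)) := by
      funext u; rw [hΦc]; ring
    rw [heq, integral_const_mul, gaussFT hξ s, ← mul_assoc, ← Complex.ofReal_mul, hsq1]
    simp
  -- measurability / integrability for first Fubini
  have hΦcont : Continuous Φ := by
    have : Φ = fun u => Real.sqrt (ξ / π) * Real.exp (-ξ * u ^ 2) := funext hΦ
    rw [this]; fun_prop
  have meas1 : ∀ s : ℝ, AEStronglyMeasurable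
      (fun p : ℝ × ℝ => ((Φ (p.1 - p.2) : ℝ) : ℂ) *
        Complex.exp (Complex.I * (s : ℂ) * (p.1 : ℂ)))
      (volume.prod (volume.restrict (Set.Icc c d))) := by
    intro s
    apply Continuous.aestronglyMeasurable
    fun_prop
  have int1 : ∀ s : ℝ, Integrable
      (fun p : ℝ × ℝ => ((Φ (p.1 - p.2) : ℝ) : ℂ) *
        Complex.exp (Complex.I * (s : ℂ) * (p.1 : ℂ)))
      (volume.prod (volume.restrict (Set.Icc c d))) := by
    intro s
    rw [integrable_prod_iff' (meas1 s)]
    constructor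
    · refine Filter.Eventually.of_forall (fun y => ?_)
      have heq : (fun z : ℝ => ((Φ (z - y) : ℝ) : ℂ) *
          Complex.exp (Complex.I * (s : ℂ) * (z : ℂ)))
          = fun z : ℝ => ((Real.sqrt (ξ / π) : ℝ) : ℂ) *
            Complex.exp (-(ξ : ℂ) * (z : ℂ) ^ 2 +
              (2 * (ξ : ℂ) * (y : ℂ) + Complex.I * (s : ℂ)) * (z : ℂ) +
              (-(ξ : ℂ) * (y : ℂ) ^ 2)) := by
        funext z
        rw [hΦc, mul_assoc, ← Complex.exp_add]
        congr 2
        push_cast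
        ring
      rw [heq]
      exact (integrable_cexp_quadratic (by simpa using hξ) _ _).const_mul _
    · have hnn : (fun y : ℝ => ∫ z : ℝ, ‖((Φ (z - y) : ℝ) : ℂ) *
          Complex.exp (Complex.I * (s : ℂ) * (z : ℂ))‖)
          = fun _ : ℝ => ∫ z : ℝ, Φ z := by
        funext y
        have h1 : ∀ z : ℝ, ‖((Φ (z - y) : ℝ) : ℂ) *
            Complex.exp (Complex.I * (s : ℂ) * (z : ℂ))‖ = Φ (z - y) := by
          intro z
          rw [norm_mul, Complex.norm_real, Real.norm_of_nonneg (hΦ0 _),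
            show Complex.I * (s : ℂ) * (z : ℂ) = ((s * z : ℝ) : ℂ) * Complex.I by
              push_cast; ring,
            hnorm1, mul_one]
        simp_rw [h1]
        exact integral_sub_right_eq_self Φ y
      rw [hnn]
      exact integrableOn_const hvol.ne
  -- fhat formula
  have key1 : ∀ s : ℝ, fhat s = (Real.sqrt (2 * π) : ℂ)⁻¹ *
      ((∫ y in Set.Icc c d, Complex.exp (Complex.I * (s : ℂ) * (y : ℂ))) *
        Complex.exp (-(s : ℂ) ^ 2 / (4 * (ξ : ℂ)))) := by
    intro s
    rw [hfhat s]
    congr 1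
    calc ∫ z : ℝ, (f z : ℂ) * Complex.exp (Complex.I * (s : ℂ) * (z : ℂ))
        = ∫ z : ℝ, ∫ y in Set.Icc c d, ((Φ (z - y) : ℝ) : ℂ) *
            Complex.exp (Complex.I * (s : ℂ) * (z : ℂ)) := by
          congr 1; funext z; rw [hfC z, ← integral_mul_const]
      _ = ∫ y in Set.Icc c d, ∫ z : ℝ, ((Φ (z - y) : ℝ) : ℂ) *
            Complex.exp (Complex.I * (s : ℂ) * (z : ℂ)) := integral_integral_swap (int1 s)
      _ = ∫ y in Set.Icc c d, Complex.exp (Complex.I * (s : ℂ) * (y : ℂ)) *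
            Complex.exp (-(s : ℂ) ^ 2 / (4 * (ξ : ℂ))) := by
          congr 1; funext y
          have ht0 := integral_sub_right_eq_self (μ := volume) (fun u : ℝ => ((Φ u : ℝ) : ℂ) *
            Complex.exp (Complex.I * (s : ℂ) * (u : ℂ)) *
            Complex.exp (Complex.I * (s : ℂ) * (y : ℂ))) y
          have ht2 : (∫ z : ℝ, ((Φ (z - y) : ℝ) : ℂ) *
              Complex.exp (Complex.I * (s : ℂ) * (z : ℂ)))
              = ∫ u : ℝ, ((Φ u : ℝ) : ℂ) * Complex.exp (Complex.I * (s : ℂ) * (u : ℂ)) *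
                Complex.exp (Complex.I * (s : ℂ) * (y : ℂ)) := by
            refine Eq.trans ?_ ht0
            congr 1
            funext z
            rw [mul_assoc (((Φ (z - y) : ℝ) : ℂ)), ← Complex.exp_add]
            congr 2
            push_cast
            ring
          rw [ht2, integral_mul_const, hG s, mul_comm]
      _ = (∫ y in Set.Icc c d, Complex.exp (Complex.I * (s : ℂ) * (y : ℂ))) *
            Complex.exp (-(s : ℂ) ^ 2 / (4 * (ξ : ℂ))) := integral_mul_const _ _
  -- the key integrand for inversion
  set K : ℂ := ((2 * π : ℝ) : ℂ)⁻¹ with hK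
  set hfun : ℝ → ℂ := fun s => Complex.exp (-(s : ℂ) ^ 2 / (4 * (ξ : ℂ))) *
    ∫ y in Set.Icc c d, Complex.exp (Complex.I * (s : ℂ) * ((y : ℂ) - (x : ℂ))) with hhfun
  have hsqrt2pi : (Real.sqrt (2 * π) : ℂ)⁻¹ * (Real.sqrt (2 * π) : ℂ)⁻¹ = K := by
    rw [hK, ← mul_inv, ← Complex.ofReal_mul, Real.mul_self_sqrt (by positivity)]
  have hft : ftilde x = K * ∫ s in Set.Icc (-ζ) ζ, hfun s := by
    rw [hftilde x]
    have hpt : ∀ s : ℝ, fhat s * Complex.exp (-Complex.I * (s : ℂ) * (x : ℂ))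
        = (Real.sqrt (2 * π) : ℂ)⁻¹ * hfun s := by
      intro s
      have hBD : (∫ y in Set.Icc c d, Complex.exp (Complex.I * (s : ℂ) * (y : ℂ))) *
          Complex.exp (-Complex.I * (s : ℂ) * (x : ℂ))
          = ∫ y in Set.Icc c d, Complex.exp (Complex.I * (s : ℂ) * ((y : ℂ) - (x : ℂ))) := by
        rw [← integral_mul_const]
        congr 1; funext y
        rw [← Complex.exp_add]; congr 1; ring
      calc fhat s * Complex.exp (-Complex.I * (s : ℂ) * (x : ℂ))
          = (Real.sqrt (2 * π) : ℂ)⁻¹ * (Complex.exp (-(s : ℂ) ^ 2 / (4 * (ξ : ℂ))) *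
            ((∫ y in Set.Icc c d, Complex.exp (Complex.I * (s : ℂ) * (y : ℂ))) *
              Complex.exp (-Complex.I * (s : ℂ) * (x : ℂ)))) := by
            rw [key1 s]; ring
        _ = (Real.sqrt (2 * π) : ℂ)⁻¹ * hfun s := by rw [hBD]
    simp_rw [hpt]
    rw [integral_const_mul, ← mul_assoc, hsqrt2pi]
  -- second Fubini
  have meas2 : AEStronglyMeasurable
      (fun p : ℝ × ℝ => Complex.exp (-(p.1 : ℂ) ^ 2 / (4 * (ξ : ℂ))) *
        Complex.exp (Complex.I * (p.1 : ℂ) * ((p.2 : ℂ) - (x : ℂ))))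
      (volume.prod (volume.restrict (Set.Icc c d))) := by
    apply Continuous.aestronglyMeasurable
    fun_prop
  have int2 : Integrable
      (fun p : ℝ × ℝ => Complex.exp (-(p.1 : ℂ) ^ 2 / (4 * (ξ : ℂ))) *
        Complex.exp (Complex.I * (p.1 : ℂ) * ((p.2 : ℂ) - (x : ℂ))))
      (volume.prod (volume.restrict (Set.Icc c d))) := by
    refine Integrable.mono'
      (g := fun p : ℝ × ℝ => Real.exp (-(1 / (4 * ξ)) * p.1 ^ 2) * (1 : ℝ)) ?_ meas2 ?_
    · exact (integrable_exp_neg_mul_sq (by positivity)).mul_prod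
        (integrableOn_const hvol.ne)
    · refine Filter.Eventually.of_forall (fun p => ?_)
      refine le_of_eq ?_
      rw [norm_mul, hnormg,
        show Complex.I * (p.1 : ℂ) * ((p.2 : ℂ) - (x : ℂ))
          = ((p.1 * (p.2 - x) : ℝ) : ℂ) * Complex.I by push_cast; ring, hnorm1]
  have hfun_int : Integrable hfun := by
    refine int2.integral_prod_left.congr (Filter.Eventually.of_forall (fun s => ?_))
    rw [hhfun]
    simp only
    rw [integral_const_mul]
  -- inversion
  have key2 : (∫ s : ℝ, hfun s) = ((2 * π : ℝ) : ℂ) * (f x : ℂ) := by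
    have hswap : (∫ s : ℝ, hfun s)
        = ∫ y in Set.Icc c d, ∫ s : ℝ, Complex.exp (-(s : ℂ) ^ 2 / (4 * (ξ : ℂ))) *
            Complex.exp (Complex.I * (s : ℂ) * ((y : ℂ) - (x : ℂ))) := by
      rw [← integral_integral_swap int2]
      congr 1; funext s
      rw [hhfun]
      simp only
      rw [integral_const_mul]
    rw [hswap]
    have inner : ∀ y : ℝ, (∫ s : ℝ, Complex.exp (-(s : ℂ) ^ 2 / (4 * (ξ : ℂ))) *
        Complex.exp (Complex.I * (s : ℂ) * ((y : ℂ) - (x : ℂ))))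
        = ((2 * π * Real.sqrt (ξ / π) : ℝ) : ℂ) *
          Complex.exp (-(ξ : ℂ) * ((y : ℂ) - (x : ℂ)) ^ 2) := by
      intro y
      have h4 : (0 : ℝ) < 1 / (4 * ξ) := by positivity
      have hg := gaussFT h4 (y - x)
      have harg : (fun s : ℝ => Complex.exp (Complex.I * ((y - x : ℝ) : ℂ) * (s : ℂ)) *
          Complex.exp (-((1 / (4 * ξ) : ℝ) : ℂ) * (s : ℂ) ^ 2))
          = fun s : ℝ => Complex.exp (-(s : ℂ) ^ 2 / (4 * (ξ : ℂ))) *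
            Complex.exp (Complex.I * (s : ℂ) * ((y : ℂ) - (x : ℂ))) := by
        funext s
        rw [mul_comm]
        congr 1
        · congr 1; push_cast; ring
        · congr 1; push_cast; ring
      rw [← harg, hg]
      congr 1
      · norm_cast
        rw [show π / (1 / (4 * ξ)) = (2 * π * Real.sqrt (ξ / π)) ^ 2 by
            rw [mul_pow, mul_pow, Real.sq_sqrt (by positivity)]; field_simp; ring]
        exact Real.sqrt_sq (by positivity)
      · congr 1
        push_cast
        field_simp
    have hrw : (∫ y in Set.Icc c d, ∫ s : ℝ, Complex.exp (-(s : ℂ) ^ 2 / (4 * (ξ : ℂ))) *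
        Complex.exp (Complex.I * (s : ℂ) * ((y : ℂ) - (x : ℂ))))
        = ∫ y in Set.Icc c d, ((2 * π * Real.sqrt (ξ / π) : ℝ) : ℂ) *
          Complex.exp (-(ξ : ℂ) * ((y : ℂ) - (x : ℂ)) ^ 2) := by
      congr 1; funext y; exact inner y
    rw [hrw, integral_const_mul, hfC x]
    have hrhs : (∫ y in Set.Icc c d, ((Φ (x - y) : ℝ) : ℂ))
        = ((Real.sqrt (ξ / π) : ℝ) : ℂ) *
          ∫ y in Set.Icc c d, Complex.exp (-(ξ : ℂ) * ((y : ℂ) - (x : ℂ)) ^ 2) := by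
      rw [← integral_const_mul]
      congr 1; funext y
      rw [hΦc]
      congr 2
      push_cast
      ring
    rw [hrhs]
    push_cast
    ring
  have h2πc : ((2 * π : ℝ) : ℂ) ≠ 0 := by
    exact_mod_cast (by positivity : (2 * π : ℝ) ≠ 0)
  have hfx : (f x : ℂ) = K * ∫ s : ℝ, hfun s := by
    rw [key2, hK, inv_mul_cancel_left₀ h2πc]
  -- split the integral
  have hsplit := integral_add_compl (measurableSet_Icc (a := -ζ) (b := ζ)) hfun_int
  have hdiff : ftilde x - (f x : ℂ) = -(K * ∫ s in (Set.Icc (-ζ) ζ)ᶜ, hfun s) := by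
    rw [hft, hfx, ← hsplit]
    ring
  rw [hdiff, norm_neg, norm_mul]
  have hnK : ‖K‖ = (2 * π)⁻¹ := by
    rw [hK, norm_inv, Complex.norm_real, Real.norm_of_nonneg (by positivity)]
  rw [hnK]
  -- pointwise bound on hfun
  have hb2 : ∀ s : ℝ, ‖hfun s‖ ≤ L * Real.exp (-(1 / (4 * ξ)) * s ^ 2) := by
    intro s
    rw [hhfun]
    simp only [norm_mul, hnormg]
    have h2 : ‖∫ y in Set.Icc c d,
        Complex.exp (Complex.I * (s : ℂ) * ((y : ℂ) - (x : ℂ)))‖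
        ≤ 1 * (volume (Set.Icc c d)).toReal := by
      refine norm_setIntegral_le_of_norm_le_const hvol (fun y _ => ?_)
      rw [show Complex.I * (s : ℂ) * ((y : ℂ) - (x : ℂ))
          = ((s * (y - x) : ℝ) : ℂ) * Complex.I by push_cast; ring, hnorm1]
    rw [hvolR, one_mul] at h2
    calc Real.exp (-(1 / (4 * ξ)) * s ^ 2) *
        ‖∫ y in Set.Icc c d, Complex.exp (Complex.I * (s : ℂ) * ((y : ℂ) - (x : ℂ)))‖
        ≤ Real.exp (-(1 / (4 * ξ)) * s ^ 2) * L :=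
          mul_le_mul_of_nonneg_left h2 (Real.exp_pos _).le
      _ = L * Real.exp (-(1 / (4 * ξ)) * s ^ 2) := mul_comm _ _
  have gint : Integrable (fun s : ℝ => L * Real.exp (-(1 / (4 * ξ)) * s ^ 2)) :=
    (integrable_exp_neg_mul_sq (by positivity)).const_mul L
  have bnd1 : ‖∫ s in (Set.Icc (-ζ) ζ)ᶜ, hfun s‖
      ≤ ∫ s in (Set.Icc (-ζ) ζ)ᶜ, L * Real.exp (-(1 / (4 * ξ)) * s ^ 2) := by
    refine le_trans (norm_integral_le_integral_norm _) ?_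
    exact setIntegral_mono_on hfun_int.norm.integrableOn gint.integrableOn
      measurableSet_Icc.compl (fun s _ => hb2 s)
  -- tail evaluation
  have hcompl : (Set.Icc (-ζ) ζ)ᶜ = Set.Iio (-ζ) ∪ Set.Ioi ζ := by
    ext s
    simp only [Set.mem_compl_iff, Set.mem_Icc, Set.mem_union, Set.mem_Iio, Set.mem_Ioi,
      not_and_or, not_le]
  have hsum : (∫ s in (Set.Icc (-ζ) ζ)ᶜ, L * Real.exp (-(1 / (4 * ξ)) * s ^ 2))
      = (∫ s in Set.Iio (-ζ), L * Real.exp (-(1 / (4 * ξ)) * s ^ 2))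
        + ∫ s in Set.Ioi ζ, L * Real.exp (-(1 / (4 * ξ)) * s ^ 2) := by
    rw [hcompl]
    exact setIntegral_union ((Set.Iic_disjoint_Ioi (by linarith)).mono_left
      Set.Iio_subset_Iic_self) measurableSet_Ioi gint.integrableOn gint.integrableOn
  have evenInt : (∫ s in Set.Iio (-ζ), L * Real.exp (-(1 / (4 * ξ)) * s ^ 2))
      = ∫ s in Set.Ioi ζ, L * Real.exp (-(1 / (4 * ξ)) * s ^ 2) := by
    rw [← MeasureTheory.integral_Iic_eq_integral_Iio, ← integral_comp_neg_Ioi]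
    congr 1
    funext s
    simp [neg_sq]
  have mono2 : (∫ s in Set.Ioi ζ, L * Real.exp (-(1 / (4 * ξ)) * s ^ 2))
      ≤ ∫ s in Set.Ioi ζ, (L / ζ) * (s * Real.exp (-(1 / (4 * ξ)) * s ^ 2)) := by
    refine setIntegral_mono_on gint.integrableOn
      (((integrable_mul_exp_neg_mul_sq (by positivity)).const_mul (L / ζ)).integrableOn)
      measurableSet_Ioi (fun s hs => ?_)
    have hs' : ζ < s := hs
    have hrw2 : L / ζ * (s * Real.exp (-(1 / (4 * ξ)) * s ^ 2))
        = (s / ζ) * (L * Real.exp (-(1 / (4 * ξ)) * s ^ 2)) := by ring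
    rw [hrw2]
    refine le_mul_of_one_le_left ?_ ((one_le_div hζ).mpr hs'.le)
    exact mul_nonneg hL0 (Real.exp_pos _).le
  have tail_eq : (∫ s in Set.Ioi ζ, (L / ζ) * (s * Real.exp (-(1 / (4 * ξ)) * s ^ 2)))
      = (L / ζ) * (Real.exp (-(1 / (4 * ξ)) * ζ ^ 2) / (2 * (1 / (4 * ξ)))) := by
    rw [integral_const_mul, tail_int (by positivity) ζ]
  have hEarg : Real.exp (-(1 / (4 * ξ)) * ζ ^ 2) = Real.exp (-ζ ^ 2 / (4 * ξ)) := by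
    congr 1; ring
  have hLval : L = (b - a) + 4 * θ := by rw [hL, hc, hd]; ring
  have hsqpi : 1 / π ≤ Real.sqrt (2 / π) := by
    have h1 : Real.sqrt ((1 / π) ^ 2) ≤ Real.sqrt (2 / π) := by
      apply Real.sqrt_le_sqrt
      rw [div_pow, one_pow, div_le_div_iff₀ (by positivity) (by positivity)]
      nlinarith [Real.pi_gt_three]
    rwa [Real.sqrt_sq (by positivity)] at h1
  have chain : (∫ s in (Set.Icc (-ζ) ζ)ᶜ, L * Real.exp (-(1 / (4 * ξ)) * s ^ 2))
      ≤ 2 * ((L / ζ) * (Real.exp (-ζ ^ 2 / (4 * ξ)) / (2 * (1 / (4 * ξ))))) := by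
    rw [hsum, evenInt, ← hEarg]
    have := le_trans mono2 (le_of_eq tail_eq)
    linarith
  calc (2 * π)⁻¹ * ‖∫ s in (Set.Icc (-ζ) ζ)ᶜ, hfun s‖
      ≤ (2 * π)⁻¹ * (2 * ((L / ζ) * (Real.exp (-ζ ^ 2 / (4 * ξ)) / (2 * (1 / (4 * ξ)))))) := by
        refine mul_le_mul_of_nonneg_left (le_trans bnd1 chain) (by positivity)
    _ = (1 / π * 2) * (L * (ξ / ζ) * Real.exp (-ζ ^ 2 / (4 * ξ))) := by
        field_simp
        ring
    _ ≤ (2 * Real.sqrt (2 / π)) * (L * (ξ / ζ) * Real.exp (-ζ ^ 2 / (4 * ξ))) := by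
        refine mul_le_mul_of_nonneg_right (by linarith) ?_
        exact mul_nonneg (mul_nonneg hL0 (by positivity)) (Real.exp_pos _).le
    _ = 2 * Real.sqrt (2 / π) * ((b - a) + 4 * θ) * (ξ / ζ)
        * Real.exp (-ζ ^ 2 / (4 * ξ)) := by rw [hLval]; ring
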